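/- Let A : ℝ → ℝ be a convex piecewise linear function with nondecreasing vertices {v_i}_{i ∈ [j]} and slopes {t_i}_{i=0}^{j} (t_i is the slope between v_i and v_{i+1}, with t_0 and t_j the leftmost and rightmost slopes). Suppose t_{ℓ-1} ≤ −1 ≤ t_ℓ and t_{r-1} ≤ 1 ≤ t_r. Then for any z, d ∈ ℝ, the minimizer w* of w ↦ |w − z − d| + A(w) is: w* = z + d if z + d ∈ [v_ℓ, v_r]; w* = v_ℓ if z + d < v_ℓ; and w* = v_r if z + d > v_r. -/

import Mathlib

theorem stmt9 (j : ℕ) (hj : 1 ≤ j) (A : ℝ → ℝ)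
    (v : Fin j → ℝ) (hv : Monotone v)
    (t : Fin (j + 1) → ℝ) (ht : Monotone t)
    -- `A` has slope `t 0` to the left of the first vertex
    (hleft : ∀ z w : ℝ, z ≤ w → w ≤ v ⟨0, hj⟩ → A w - A z = t 0 * (w - z))
    -- `A` has slope `t i` between the `i`-th and `(i+1)`-th vertices
    (hmid : ∀ (i : ℕ) (h : i + 1 < j), ∀ z w : ℝ,
      v ⟨i, Nat.lt_of_succ_lt h⟩ ≤ z → z ≤ w → w ≤ v ⟨i + 1, h⟩ →
      A w - A z = t ⟨i + 1, Nat.lt_of_succ_lt (Nat.succ_lt_succ h)⟩ * (w - z))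
    -- `A` has slope `t j` to the right of the last vertex
    (hright : ∀ z w : ℝ, v ⟨j - 1, Nat.sub_lt hj one_pos⟩ ≤ z → z ≤ w →
      A w - A z = t (Fin.last j) * (w - z))
    (ℓ r : Fin j)
    (hℓ : t ℓ.castSucc ≤ -1 ∧ -1 ≤ t ℓ.succ)
    (hr : t r.castSucc ≤ 1 ∧ 1 ≤ t r.succ)
    (z d : ℝ) :
    ((v ℓ ≤ z + d ∧ z + d ≤ v r) → ∀ w : ℝ, |z + d - z - d| + A (z + d) ≤ |w - z - d| + A w) ∧
    (z + d < v ℓ → ∀ w : ℝ, |v ℓ - z - d| + A (v ℓ) ≤ |w - z - d| + A w) ∧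
    (v r < z + d → ∀ w : ℝ, |v r - z - d| + A (v r) ≤ |w - z - d| + A w) := by
  obtain ⟨hℓ1, hℓ2⟩ := hℓ
  obtain ⟨hr1, hr2⟩ := hr
  -- Upper slope bound: to the left of v i, slopes are ≤ t i
  have U : ∀ (i : ℕ) (hi : i < j), ∀ a b : ℝ, a ≤ b → b ≤ v ⟨i, hi⟩ →
      A b - A a ≤ t ⟨i, Nat.lt_succ_of_lt hi⟩ * (b - a) := by
    intro i
    induction i with
    | zero =>
      intro hi a b hab hb
      have h := hleft a b hab hb
      rw [h]
      apply le_of_eq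
      exact congrArg (· * (b - a)) (congrArg t (Fin.ext rfl))
    | succ i ih =>
      intro hi a b hab hb
      have hi' : i < j := Nat.lt_of_succ_lt hi
      have htm : t ⟨i, Nat.lt_succ_of_lt hi'⟩ ≤ t ⟨i + 1, Nat.lt_succ_of_lt hi⟩ := by
        apply ht
        simp [Fin.le_def]
      rcases le_total b (v ⟨i, hi'⟩) with hb' | hb'
      · calc A b - A a ≤ t ⟨i, Nat.lt_succ_of_lt hi'⟩ * (b - a) := ih hi' a b hab hb'
          _ ≤ t ⟨i + 1, Nat.lt_succ_of_lt hi⟩ * (b - a) :=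
            mul_le_mul_of_nonneg_right htm (by linarith)
      · rcases le_total a (v ⟨i, hi'⟩) with ha | ha
        · have h1 := ih hi' a (v ⟨i, hi'⟩) ha le_rfl
          have h2 := hmid i hi (v ⟨i, hi'⟩) b le_rfl hb' hb
          have h3 : t ⟨i, Nat.lt_succ_of_lt hi'⟩ * (v ⟨i, hi'⟩ - a) ≤
              t ⟨i + 1, Nat.lt_succ_of_lt hi⟩ * (v ⟨i, hi'⟩ - a) :=
            mul_le_mul_of_nonneg_right htm (by linarith)
          have h2' : A b - A (v ⟨i, hi'⟩) =
              t ⟨i + 1, Nat.lt_succ_of_lt hi⟩ * (b - v ⟨i, hi'⟩) := by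
            rw [h2]
          nlinarith [h1, h2', h3]
        · have h2 := hmid i hi a b ha hab hb
          rw [h2]
  -- Lower slope bound: to the right of v i, slopes are ≥ t (i+1)
  have L0 : ∀ (m i : ℕ) (hi : i < j), i + m = j - 1 → ∀ a b : ℝ, v ⟨i, hi⟩ ≤ a → a ≤ b →
      t ⟨i + 1, Nat.succ_lt_succ hi⟩ * (b - a) ≤ A b - A a := by
    intro m
    induction m with
    | zero =>
      intro i hi him a b ha hab
      have hij : i = j - 1 := by omega
      subst hij
      have h := hright a b ha hab
      rw [h]
      apply le_of_eq
      congr 1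
      exact congrArg t (Fin.ext (by simp [Fin.last]; omega)).symm
    | succ m ih =>
      intro i hi him a b ha hab
      have hi1 : i + 1 < j := by omega
      have htm : t ⟨i + 1, Nat.succ_lt_succ hi⟩ ≤ t ⟨i + 2, Nat.succ_lt_succ hi1⟩ := by
        apply ht
        simp [Fin.le_def]
      rcases le_total (v ⟨i + 1, hi1⟩) a with ha' | ha'
      · have h1 := ih (i + 1) hi1 (by omega) a b ha' hab
        calc t ⟨i + 1, Nat.succ_lt_succ hi⟩ * (b - a)
            ≤ t ⟨i + 2, Nat.succ_lt_succ hi1⟩ * (b - a) :=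
              mul_le_mul_of_nonneg_right htm (by linarith)
          _ ≤ A b - A a := h1
      · rcases le_total (v ⟨i + 1, hi1⟩) b with hb | hb
        · have h1 := hmid i hi1 a (v ⟨i + 1, hi1⟩) ha ha' le_rfl
          have h2 := ih (i + 1) hi1 (by omega) (v ⟨i + 1, hi1⟩) b le_rfl hb
          have h1' : A (v ⟨i + 1, hi1⟩) - A a =
              t ⟨i + 1, Nat.succ_lt_succ hi⟩ * (v ⟨i + 1, hi1⟩ - a) := by
            rw [h1]
          have h3 : t ⟨i + 1, Nat.succ_lt_succ hi⟩ * (b - v ⟨i + 1, hi1⟩) ≤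
              t ⟨i + 2, Nat.succ_lt_succ hi1⟩ * (b - v ⟨i + 1, hi1⟩) :=
            mul_le_mul_of_nonneg_right htm (by linarith)
          nlinarith [h1', h2, h3]
        · have h1 := hmid i hi1 a b ha hab hb
          rw [h1]
  have U' : ∀ (i : Fin j) (a b : ℝ), a ≤ b → b ≤ v i → A b - A a ≤ t i.castSucc * (b - a) := by
    intro i a b hab hb
    have := U i.val i.isLt a b hab (by simpa using hb)
    convert this using 2
    exact congrArg t (Fin.ext rfl)
  have L' : ∀ (i : Fin j) (a b : ℝ), v i ≤ a → a ≤ b → t i.succ * (b - a) ≤ A b - A a := by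
    intro i a b ha hab
    have := L0 (j - 1 - i.val) i.val i.isLt (by omega) a b (by simpa using ha) hab
    convert this using 2
    exact congrArg t (Fin.ext rfl)
  refine ⟨?_, ?_, ?_⟩
  · rintro ⟨h1, h2⟩ w
    have hz : |z + d - z - d| = 0 := by simp
    rcases le_total w (z + d) with hw | hw
    · have hU := U' r w (z + d) hw h2
      have hb : t r.castSucc * (z + d - w) ≤ 1 * (z + d - w) :=
        mul_le_mul_of_nonneg_right hr1 (by linarith)
      have habs : (z + d) - w ≤ |w - z - d| := by
        have : (z + d) - w ≤ |(z + d) - w| := le_abs_self _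
        rwa [show w - z - d = -((z + d) - w) by ring, abs_neg]
      linarith
    · have hL := L' ℓ (z + d) w h1 hw
      have hb : (-1 : ℝ) * (w - (z + d)) ≤ t ℓ.succ * (w - (z + d)) :=
        mul_le_mul_of_nonneg_right hℓ2 (by linarith)
      have habs : w - (z + d) ≤ |w - z - d| := by
        have : w - (z + d) ≤ |w - (z + d)| := le_abs_self _
        rwa [show w - z - d = w - (z + d) by ring]
      linarith
  · intro hp w
    have hz : |v ℓ - z - d| = v ℓ - (z + d) := by
      rw [show v ℓ - z - d = v ℓ - (z + d) by ring]
      exact abs_of_pos (by linarith)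
    have habs : w - (z + d) ≤ |w - z - d| := by
      have : w - (z + d) ≤ |w - (z + d)| := le_abs_self _
      rwa [show w - z - d = w - (z + d) by ring]
    rcases le_total w (v ℓ) with hw | hw
    · have hU := U' ℓ w (v ℓ) hw le_rfl
      have hb : t ℓ.castSucc * (v ℓ - w) ≤ (-1) * (v ℓ - w) :=
        mul_le_mul_of_nonneg_right hℓ1 (by linarith)
      linarith
    · have hL := L' ℓ (v ℓ) w le_rfl hw
      have hb : (-1 : ℝ) * (w - v ℓ) ≤ t ℓ.succ * (w - v ℓ) :=
        mul_le_mul_of_nonneg_right hℓ2 (by linarith)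
      linarith
  · intro hp w
    have hz : |v r - z - d| = (z + d) - v r := by
      rw [show v r - z - d = -((z + d) - v r) by ring, abs_neg]
      exact abs_of_pos (by linarith)
    have habs : (z + d) - w ≤ |w - z - d| := by
      have : (z + d) - w ≤ |(z + d) - w| := le_abs_self _
      rwa [show w - z - d = -((z + d) - w) by ring, abs_neg]
    rcases le_total w (v r) with hw | hw
    · have hU := U' r w (v r) hw le_rfl
      have hb : t r.castSucc * (v r - w) ≤ 1 * (v r - w) :=
        mul_le_mul_of_nonneg_right hr1 (by linarith)
      linarith
    · have hL := L' r (v r) w le_rfl hw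
      have hb : (1 : ℝ) * (w - v r) ≤ t r.succ * (w - v r) :=
        mul_le_mul_of_nonneg_right hr2 (by linarith)
      linarith
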